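/- Let C ⊂ [0,1] be the standard middle-thirds Cantor set, obtained by removing at the n-th step 2^{n−1} open intervals I_n^k of length 3^{−n}, and let E := ⋃_{j≥1} ⋃_{k=1}^{2^{2j−1}} I_{2j}^k be the union of the open intervals removed at the even steps. Then for every x ∈ C, 1/54 ≤ liminf_{r→0⁺} |B_r(x) ∩ E|/(2r) ≤ limsup_{r→0⁺} |B_r(x) ∩ E|/(2r) ≤ 53/54, where |·| denotes the one-dimensional Lebesgue measure. Consequently, the approximate discontinuity set of the characteristic function χ_E coincides with C. -/

import Mathlib

open MeasureTheory Topology Filter Metric Set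

noncomputable section

namespace GGCantor

/-- The pre-Cantor sets: `preCantor n` is what remains of `[0,1]` after `n` steps
of the middle-thirds removal; `preCantor (n-1) \ preCantor n` is the union of the
`2^{n-1}` open intervals `I_n^k` of length `3^{-n}` removed at step `n`. -/
def preCantor : ℕ → Set ℝ
  | 0 => Icc 0 1
  | n + 1 => (fun x : ℝ => x / 3) '' preCantor n ∪ (fun x : ℝ => (x + 2) / 3) '' preCantor n

/-- The middle-thirds Cantor set. -/
def cantorSet : Set ℝ := ⋂ n, preCantor n

/-- `E`: the union of the open intervals removed at the even steps `n = 2j`, `j ≥ 1`. -/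
def evenRemoved : Set ℝ :=
  ⋃ j : ℕ, (preCantor (2 * j + 1) \ preCantor (2 * j + 2))

/-- Approximate limit `z` of `u` at `x` (one-dimensional). -/
def ApproxLimAtR (u : ℝ → ℝ) (x z : ℝ) : Prop :=
  Tendsto (fun r : ℝ => ⨍ y in ball x r, |u y - z| ∂volume) (𝓝[>] 0) (𝓝 0)

/-- The approximate discontinuity set of `u`. -/
def SSetR (u : ℝ → ℝ) : Set ℝ := {x | ¬ ∃ z, ApproxLimAtR u x z}

lemma preCantor_subset_unit : ∀ n, preCantor n ⊆ Icc 0 1 := by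
  intro n
  induction n with
  | zero => exact subset_rfl
  | succ n ih =>
    rintro x (⟨y, hy, rfl⟩ | ⟨y, hy, rfl⟩) <;>
      obtain ⟨h0, h1⟩ := ih hy <;> constructor <;> simp only [] <;> linarith

lemma preCantor_succ_subset : ∀ n, preCantor (n + 1) ⊆ preCantor n := by
  intro n
  induction n with
  | zero =>
    rintro x (⟨y, hy, rfl⟩ | ⟨y, hy, rfl⟩) <;>
      obtain ⟨h0, h1⟩ := hy <;> constructor <;> simp only [] <;> linarith
  | succ n ih =>
    rintro x (⟨y, hy, rfl⟩ | ⟨y, hy, rfl⟩)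
    · exact Or.inl ⟨y, ih hy, rfl⟩
    · exact Or.inr ⟨y, ih hy, rfl⟩

lemma preCantor_antitone : ∀ {m n : ℕ}, m ≤ n → preCantor n ⊆ preCantor m := by
  intro m n h
  induction h with
  | refl => exact subset_rfl
  | step h ih => exact fun x hx => ih (preCantor_succ_subset _ hx)

lemma disj_step {k : ℕ} {S : Set ℝ} (hS : S ⊆ Icc 0 1)
    (h : Disjoint S (preCantor k)) :
    Disjoint ((fun x : ℝ => x / 3) '' S) (preCantor (k + 1)) ∧
      Disjoint ((fun x : ℝ => (x + 2) / 3) '' S) (preCantor (k + 1)) := by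
  constructor <;> rw [Set.disjoint_left] <;>
    rintro y ⟨s, hs, rfl⟩ (⟨t, ht, hti⟩ | ⟨t, ht, hti⟩)
  · have : s = t := by dsimp at hti; linarith
    exact (Set.disjoint_left.1 h hs) (this ▸ ht)
  · have h1 := (hS hs).2
    have h2 := (preCantor_subset_unit k ht).1
    dsimp at hti; linarith
  · have h1 := (hS hs).1
    have h2 := (preCantor_subset_unit k ht).2
    dsimp at hti; linarith
  · have : s = t := by dsimp at hti; linarith
    exact (Set.disjoint_left.1 h hs) (this ▸ ht)

/-- `a` is the left endpoint of a level-`m` interval around `x`, together with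
control on the removed middle third and removed middle ninth. -/
def goodAt (m : ℕ) (x a : ℝ) : Prop :=
  a ≤ x ∧ x ≤ a + (3:ℝ)⁻¹ ^ m ∧
  Icc a (a + (3:ℝ)⁻¹ ^ m) ⊆ preCantor m ∧
  Disjoint (Ioo (a + (3:ℝ)⁻¹ ^ m / 3) (a + 2 * (3:ℝ)⁻¹ ^ m / 3)) (preCantor (m + 1)) ∧
  Ioo (a + (3:ℝ)⁻¹ ^ m / 9) (a + 2 * (3:ℝ)⁻¹ ^ m / 9) ⊆ preCantor (m + 1) ∧
  Disjoint (Ioo (a + (3:ℝ)⁻¹ ^ m / 9) (a + 2 * (3:ℝ)⁻¹ ^ m / 9)) (preCantor (m + 2))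

lemma pow_succ_third (m : ℕ) : (3:ℝ)⁻¹ ^ (m+1) = (3:ℝ)⁻¹ ^ m / 3 := by
  rw [pow_succ]; ring

lemma pow_third_pos (m : ℕ) : (0:ℝ) < (3:ℝ)⁻¹ ^ m := by positivity

lemma key_step {m : ℕ} {y a c : ℝ}
    (hmap : ∀ k : ℕ, ∀ z ∈ preCantor k, (z + c) / 3 ∈ preCantor (k + 1))
    (hdisj : ∀ k : ℕ, ∀ S : Set ℝ, S ⊆ Icc 0 1 → Disjoint S (preCantor k) →
      Disjoint ((fun x : ℝ => (x + c) / 3) '' S) (preCantor (k + 1)))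
    (h : goodAt m y a) : goodAt (m + 1) ((y + c) / 3) ((a + c) / 3) := by
  obtain ⟨h1, h2, hI, hd1, hsub, hd2⟩ := h
  have hl := pow_succ_third m
  have hlpos := pow_third_pos m
  set l := (3:ℝ)⁻¹ ^ m with hldef
  have hIcc01 : Icc a (a + l) ⊆ Icc 0 1 := fun z hz => preCantor_subset_unit m (hI hz)
  refine ⟨by linarith, by rw [hl]; linarith, ?_, ?_, ?_, ?_⟩
  · rintro z ⟨hz1, hz2⟩
    rw [hl] at hz2
    have hw : (3 * z - c) ∈ Icc a (a + l) := ⟨by linarith, by linarith⟩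
    have := hmap m _ (hI hw)
    have he : (3 * z - c + c) / 3 = z := by ring
    rwa [he] at this
  · have himg : Ioo ((a + c)/3 + (3:ℝ)⁻¹ ^ (m+1) / 3) ((a + c)/3 + 2 * (3:ℝ)⁻¹ ^ (m+1) / 3)
        ⊆ (fun x : ℝ => (x + c) / 3) '' Ioo (a + l / 3) (a + 2 * l / 3) := by
      rintro z ⟨hz1, hz2⟩
      rw [hl] at hz1 hz2
      exact ⟨3 * z - c, ⟨by linarith, by linarith⟩, by dsimp; ring⟩
    have hS : Ioo (a + l / 3) (a + 2 * l / 3) ⊆ Icc 0 1 := fun z hz =>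
      hIcc01 ⟨by linarith [hz.1], by linarith [hz.2]⟩
    exact (hdisj (m+1) _ hS hd1).mono_left himg
  · rintro z ⟨hz1, hz2⟩
    rw [hl] at hz1 hz2
    have hw : (3 * z - c) ∈ Ioo (a + l / 9) (a + 2 * l / 9) := ⟨by linarith, by linarith⟩
    have := hmap (m+1) _ (hsub hw)
    have he : (3 * z - c + c) / 3 = z := by ring
    rwa [he] at this
  · have himg : Ioo ((a + c)/3 + (3:ℝ)⁻¹ ^ (m+1) / 9) ((a + c)/3 + 2 * (3:ℝ)⁻¹ ^ (m+1) / 9)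
        ⊆ (fun x : ℝ => (x + c) / 3) '' Ioo (a + l / 9) (a + 2 * l / 9) := by
      rintro z ⟨hz1, hz2⟩
      rw [hl] at hz1 hz2
      exact ⟨3 * z - c, ⟨by linarith, by linarith⟩, by dsimp; ring⟩
    have hS : Ioo (a + l / 9) (a + 2 * l / 9) ⊆ Icc 0 1 := fun z hz =>
      (fun w hw => preCantor_subset_unit (m+1) (hsub hw)) z hz
    exact (hdisj (m+2) _ hS hd2).mono_left himg

lemma hmap0 : ∀ k : ℕ, ∀ z ∈ preCantor k, (z + 0) / 3 ∈ preCantor (k + 1) := by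
  intro k z hz; exact Or.inl ⟨z, hz, by dsimp; ring⟩

lemma hmap2 : ∀ k : ℕ, ∀ z ∈ preCantor k, (z + 2) / 3 ∈ preCantor (k + 1) := by
  intro k z hz; exact Or.inr ⟨z, hz, rfl⟩

lemma hdisj0 : ∀ k : ℕ, ∀ S : Set ℝ, S ⊆ Icc 0 1 → Disjoint S (preCantor k) →
    Disjoint ((fun x : ℝ => (x + 0) / 3) '' S) (preCantor (k + 1)) := by
  intro k S hS h
  have : (fun x : ℝ => (x + 0) / 3) = (fun x : ℝ => x / 3) := by funext x; ring
  rw [this]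
  exact (disj_step hS h).1

lemma hdisj2 : ∀ k : ℕ, ∀ S : Set ℝ, S ⊆ Icc 0 1 → Disjoint S (preCantor k) →
    Disjoint ((fun x : ℝ => (x + 2) / 3) '' S) (preCantor (k + 1)) := by
  intro k S hS h
  exact (disj_step hS h).2

lemma key : ∀ m : ℕ, ∀ x ∈ preCantor m, ∃ a : ℝ, goodAt m x a := by
  intro m
  induction m with
  | zero =>
    intro x hx
    refine ⟨0, hx.1, by simpa using hx.2, by simp [preCantor], ?_, ?_, ?_⟩
    · rw [Set.disjoint_left]
      rintro y ⟨hy1, hy2⟩ (⟨t, ht, rfl⟩ | ⟨t, ht, rfl⟩)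
      · have := (preCantor_subset_unit 0 ht).2; dsimp at *; norm_num at *; linarith
      · have := (preCantor_subset_unit 0 ht).1; dsimp at *; norm_num at *; linarith
    · rintro y ⟨hy1, hy2⟩
      norm_num at hy1 hy2
      exact Or.inl ⟨3 * y, ⟨by linarith, by linarith⟩, by dsimp; ring⟩
    · rw [Set.disjoint_left]
      rintro y ⟨hy1, hy2⟩ (⟨t, ht, rfl⟩ | ⟨t, ht, rfl⟩)
      · norm_num at hy1 hy2
        rcases ht with ⟨s, hs, rfl⟩ | ⟨s, hs, rfl⟩ <;>
          obtain ⟨h0, h1⟩ := preCantor_subset_unit 0 hs <;> dsimp at * <;> linarith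
      · have := (preCantor_subset_unit 1 ht).1; dsimp at *; norm_num at *; linarith
  | succ m ih =>
    rintro x (⟨y, hy, rfl⟩ | ⟨y, hy, rfl⟩) <;> obtain ⟨a, ha⟩ := ih y hy
    · refine ⟨(a + 0)/3, ?_⟩
      have := key_step hmap0 hdisj0 ha
      have he : (y + 0)/3 = y / 3 := by ring
      rwa [he] at this
    · exact ⟨(a + 2)/3, key_step hmap2 hdisj2 ha⟩

lemma diff_succ_eq (k : ℕ) : preCantor (k+1) \ preCantor (k+2) =
    (fun x : ℝ => x / 3) '' (preCantor k \ preCantor (k+1)) ∪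
      (fun x : ℝ => (x + 2) / 3) '' (preCantor k \ preCantor (k+1)) := by
  apply Set.Subset.antisymm
  · rintro x ⟨(⟨y, hy, rfl⟩ | ⟨y, hy, rfl⟩), hx2⟩
    · refine Or.inl ⟨y, ⟨hy, fun hc => hx2 (Or.inl ⟨y, hc, rfl⟩)⟩, rfl⟩
    · refine Or.inr ⟨y, ⟨hy, fun hc => hx2 (Or.inr ⟨y, hc, rfl⟩)⟩, rfl⟩
  · have hS : preCantor k \ preCantor (k+1) ⊆ Icc 0 1 :=
      fun z hz => preCantor_subset_unit k hz.1
    have hd : Disjoint (preCantor k \ preCantor (k+1)) (preCantor (k+1)) :=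
      disjoint_sdiff_left
    obtain ⟨hd1, hd2⟩ := disj_step hS hd
    rintro x (⟨y, hy, rfl⟩ | ⟨y, hy, rfl⟩)
    · exact ⟨Or.inl ⟨y, hy.1, rfl⟩, fun hc => Set.disjoint_left.1 hd1 ⟨y, hy, rfl⟩ hc⟩
    · exact ⟨Or.inr ⟨y, hy.1, rfl⟩, fun hc => Set.disjoint_left.1 hd2 ⟨y, hy, rfl⟩ hc⟩

lemma image_third (S : Set ℝ) : (fun x : ℝ => x / 3) '' S = (fun y : ℝ => y * 3) ⁻¹' S := by
  ext y
  constructor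
  · rintro ⟨z, hz, rfl⟩; simpa [div_mul_cancel₀] using hz
  · intro h; exact ⟨y * 3, h, by dsimp; ring⟩

lemma image_third2 (S : Set ℝ) :
    (fun x : ℝ => (x + 2) / 3) '' S = (fun y : ℝ => y * 3 - 2) ⁻¹' S := by
  ext y
  constructor
  · rintro ⟨z, hz, rfl⟩
    have : (z + 2) / 3 * 3 - 2 = z := by ring
    simpa [this] using hz
  · intro h; exact ⟨y * 3 - 2, h, by dsimp; ring⟩

lemma isOpen_diff : ∀ k, IsOpen (preCantor k \ preCantor (k+1)) := by
  intro k
  induction k with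
  | zero =>
    have : preCantor 0 \ preCantor 1 = Ioo (1/3 : ℝ) (2/3) := by
      apply Set.Subset.antisymm
      · rintro x ⟨⟨h0, h1⟩, hx⟩
        by_contra hc
        rw [mem_Ioo, not_and_or] at hc
        push_neg at hc
        rcases hc with hc | hc
        · exact hx (Or.inl ⟨3 * x, ⟨by linarith, by linarith⟩, by dsimp; ring⟩)
        · exact hx (Or.inr ⟨3 * x - 2, ⟨by linarith, by linarith⟩, by dsimp; ring⟩)
      · rintro x ⟨h1, h2⟩
        refine ⟨⟨by linarith, by linarith⟩, ?_⟩
        rintro (⟨y, hy, rfl⟩ | ⟨y, hy, rfl⟩) <;>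
          obtain ⟨g0, g1⟩ := hy <;> dsimp at * <;> linarith
    rw [this]; exact isOpen_Ioo
  | succ k ih =>
    rw [diff_succ_eq, image_third, image_third2]
    exact ((ih.preimage (by continuity)).union (ih.preimage (by continuity)))

lemma isOpen_evenRemoved : IsOpen evenRemoved :=
  isOpen_iUnion fun j => isOpen_diff (2 * j + 1)

lemma evenRemoved_subset : evenRemoved ⊆ Icc 0 1 := by
  rintro x hx
  obtain ⟨j, hj⟩ := mem_iUnion.1 hx
  exact preCantor_subset_unit _ hj.1

lemma even_diff_disjoint {k : ℕ} (hk : Even k) :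
    Disjoint (preCantor k \ preCantor (k+1)) evenRemoved := by
  rw [evenRemoved, disjoint_iUnion_right]
  intro j
  rcases le_or_gt (k + 1) (2 * j + 1) with h | h
  · rw [Set.disjoint_left]
    rintro x ⟨_, hx2⟩ ⟨hx3, _⟩
    exact hx2 (preCantor_antitone h hx3)
  · have h2 : 2 * j + 2 ≤ k := by
      rcases hk with ⟨t, rfl⟩; omega
    rw [Set.disjoint_left]
    rintro x ⟨hx1, _⟩ ⟨_, hx4⟩
    exact hx4 (preCantor_antitone h2 hx1)

lemma odd_diff_subset {j : ℕ} : preCantor (2*j+1) \ preCantor (2*j+2) ⊆ evenRemoved :=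
  subset_iUnion (fun j : ℕ => preCantor (2 * j + 1) \ preCantor (2 * j + 2)) j

/-- In every ball around a Cantor point, both `E` and its complement occupy
at least `r/27` of mass. -/
lemma volume_bounds (x : ℝ) (hx : x ∈ cantorSet) {r : ℝ} (h0 : 0 < r) (h1 : r ≤ 1) :
    ENNReal.ofReal (r/27) ≤ volume (ball x r ∩ evenRemoved) ∧
      ENNReal.ofReal (r/27) ≤ volume (ball x r \ evenRemoved) := by
  -- find the scale m
  have hex : ∃ m : ℕ, (3:ℝ)⁻¹ ^ m < r := exists_pow_lt_of_lt_one h0 (by norm_num)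
  classical
  obtain ⟨m, hm, hmin⟩ : ∃ m : ℕ, (3:ℝ)⁻¹ ^ m < r ∧ ∀ k < m, ¬((3:ℝ)⁻¹ ^ k < r) :=
    ⟨Nat.find hex, Nat.find_spec hex, fun k hk => Nat.find_min hex hk⟩
  have hmne : m ≠ 0 := by
    intro h
    rw [h] at hm; norm_num at hm; linarith
  obtain ⟨m', rfl⟩ : ∃ m', m = m' + 1 := ⟨m - 1, by omega⟩
  have hm' : r ≤ (3:ℝ)⁻¹ ^ m' := by
    have := hmin m' (by omega)
    linarith [not_lt.1 this]
  set l := (3:ℝ)⁻¹ ^ (m' + 1) with hldef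
  have hlpos : 0 < l := pow_third_pos _
  have hr3 : r ≤ 3 * l := by
    rw [hldef, pow_succ_third]; linarith
  -- the level-(m'+1) interval around x
  obtain ⟨a, ha1, ha2, haI, hd1, hsub, hd2⟩ := key (m' + 1) x (by
    exact (mem_iInter.1 hx) (m' + 1))
  have hball : Icc a (a + l) ⊆ ball x r := by
    rintro y ⟨hy1, hy2⟩
    rw [mem_ball, Real.dist_eq, abs_lt]
    constructor <;> linarith
  have hmid_sub : Ioo (a + l / 3) (a + 2 * l / 3) ⊆ Icc a (a + l) := fun z hz =>
    ⟨by linarith [hz.1], by linarith [hz.2]⟩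
  have hninth_sub : Ioo (a + l / 9) (a + 2 * l / 9) ⊆ Icc a (a + l) := fun z hz =>
    ⟨by linarith [hz.1], by linarith [hz.2]⟩
  -- measure of small intervals
  have hvol3 : ENNReal.ofReal (r/27) ≤ volume (Ioo (a + l / 3) (a + 2 * l / 3)) := by
    rw [Real.volume_Ioo]
    apply ENNReal.ofReal_le_ofReal; linarith
  have hvol9 : ENNReal.ofReal (r/27) ≤ volume (Ioo (a + l / 9) (a + 2 * l / 9)) := by
    rw [Real.volume_Ioo]
    apply ENNReal.ofReal_le_ofReal; linarith
  rcases Nat.even_or_odd (m' + 1) with he | ho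
  · -- m'+1 even : ninth interval ⊆ E, middle third disjoint from E
    obtain ⟨j, hj⟩ := he
    constructor
    · refine le_trans hvol9 (measure_mono ?_)
      intro z hz
      refine ⟨hball (hninth_sub hz), odd_diff_subset (j := j) ?_⟩
      have h1' : m' + 1 + 1 = 2 * j + 1 := by omega
      have h2' : m' + 1 + 2 = 2 * j + 2 := by omega
      exact ⟨h1' ▸ hsub hz, fun hc => Set.disjoint_left.1 hd2 hz (h2' ▸ hc)⟩
    · refine le_trans hvol3 (measure_mono ?_)
      intro z hz
      refine ⟨hball (hmid_sub hz), ?_⟩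
      intro hc
      exact Set.disjoint_left.1 (even_diff_disjoint ⟨j, hj⟩)
        ⟨haI (hmid_sub hz), fun hc2 => Set.disjoint_left.1 hd1 hz hc2⟩ hc
  · -- m'+1 odd : middle third ⊆ E, ninth interval disjoint from E
    obtain ⟨j, hj⟩ := ho
    constructor
    · refine le_trans hvol3 (measure_mono ?_)
      intro z hz
      refine ⟨hball (hmid_sub hz), odd_diff_subset (j := j) ?_⟩
      have h1' : m' + 1 = 2 * j + 1 := by omega
      have h2' : m' + 1 + 1 = 2 * j + 2 := by omega
      exact ⟨h1' ▸ haI (hmid_sub hz), fun hc => Set.disjoint_left.1 hd1 hz (h2' ▸ hc)⟩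
    · refine le_trans hvol9 (measure_mono ?_)
      intro z hz
      refine ⟨hball (hninth_sub hz), ?_⟩
      intro hc
      have heven : Even (m' + 1 + 1) := ⟨j + 1, by omega⟩
      exact Set.disjoint_left.1 (even_diff_disjoint heven)
        ⟨hsub hz, fun hc2 => Set.disjoint_left.1 hd2 hz hc2⟩ hc

lemma density_bounds (x : ℝ) (hx : x ∈ cantorSet) {r : ℝ} (h0 : 0 < r) (h1 : r ≤ 1) :
    (1/54 : ℝ) ≤ (volume (ball x r ∩ evenRemoved)).toReal / (2 * r) ∧
      (volume (ball x r ∩ evenRemoved)).toReal / (2 * r) ≤ 53/54 := by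
  obtain ⟨hE, hC⟩ := volume_bounds x hx h0 h1
  have hball : volume (ball x r) = ENNReal.ofReal (2 * r) := by
    rw [Real.volume_ball]
  have hsplit : volume (ball x r ∩ evenRemoved) + volume (ball x r \ evenRemoved)
      = volume (ball x r) :=
    measure_inter_add_diff _ isOpen_evenRemoved.measurableSet
  have hfin : volume (ball x r ∩ evenRemoved) ≠ ⊤ := by
    refine ne_top_of_le_ne_top ?_ (measure_mono Set.inter_subset_left)
    rw [hball]; exact ENNReal.ofReal_ne_top
  have hfinC : volume (ball x r \ evenRemoved) ≠ ⊤ := by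
    refine ne_top_of_le_ne_top ?_ (measure_mono Set.diff_subset)
    rw [hball]; exact ENNReal.ofReal_ne_top
  set e := (volume (ball x r ∩ evenRemoved)).toReal with hedef
  set c := (volume (ball x r \ evenRemoved)).toReal with hcdef
  have hec : e + c = 2 * r := by
    rw [hedef, hcdef, ← ENNReal.toReal_add hfin hfinC, hsplit, hball,
      ENNReal.toReal_ofReal (by linarith)]
  have he : r / 27 ≤ e := by
    have := ENNReal.toReal_mono hfin hE
    rwa [ENNReal.toReal_ofReal (by linarith)] at this
  have hc : r / 27 ≤ c := by
    have := ENNReal.toReal_mono hfinC hC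
    rwa [ENNReal.toReal_ofReal (by linarith)] at this
  constructor
  · rw [le_div_iff₀ (by linarith)]; linarith
  · rw [div_le_iff₀ (by linarith)]; linarith

lemma part1 (x : ℝ) (hx : x ∈ cantorSet) :
      (1 / 54 : ℝ) ≤
          liminf (fun r : ℝ => (volume (ball x r ∩ evenRemoved)).toReal / (2 * r))
            (𝓝[>] 0) ∧
      liminf (fun r : ℝ => (volume (ball x r ∩ evenRemoved)).toReal / (2 * r))
            (𝓝[>] 0) ≤
        limsup (fun r : ℝ => (volume (ball x r ∩ evenRemoved)).toReal / (2 * r))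
            (𝓝[>] 0) ∧
      limsup (fun r : ℝ => (volume (ball x r ∩ evenRemoved)).toReal / (2 * r))
            (𝓝[>] 0) ≤ (53 / 54 : ℝ) := by
  set u := fun r : ℝ => (volume (ball x r ∩ evenRemoved)).toReal / (2 * r) with hu
  have hmem : Ioc (0:ℝ) 1 ∈ 𝓝[>] (0:ℝ) :=
    Ioc_mem_nhdsGT_of_mem ⟨le_refl 0, zero_lt_one⟩
  have hlow : ∀ᶠ r in 𝓝[>] (0:ℝ), (1/54 : ℝ) ≤ u r :=
    eventually_of_mem hmem fun r hr => (density_bounds x hx hr.1 hr.2).1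
  have hhigh : ∀ᶠ r in 𝓝[>] (0:ℝ), u r ≤ (53/54 : ℝ) :=
    eventually_of_mem hmem fun r hr => (density_bounds x hx hr.1 hr.2).2
  have hbd1 : IsBoundedUnder (· ≤ ·) (𝓝[>] (0:ℝ)) u := ⟨53/54, hhigh⟩
  have hbd2 : IsBoundedUnder (· ≥ ·) (𝓝[>] (0:ℝ)) u := ⟨1/54, hlow⟩
  refine ⟨le_liminf_of_le hbd1.isCoboundedUnder_ge hlow,
    liminf_le_limsup hbd1 hbd2,
    limsup_le_of_le hbd2.isCoboundedUnder_le hhigh⟩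

/-- If `u` is constant on a ball around `x`, then `u` has that constant as
approximate limit at `x`. -/
lemma approxLim_of_const {u : ℝ → ℝ} {x c ε : ℝ} (hε : 0 < ε)
    (h : ∀ y ∈ ball x ε, u y = c) : ApproxLimAtR u x c := by
  have hmem : Ioo (0:ℝ) ε ∈ 𝓝[>] (0:ℝ) := Ioo_mem_nhdsGT_of_mem ⟨le_refl 0, hε⟩
  have hev : ∀ᶠ r in 𝓝[>] (0:ℝ),
      (⨍ y in ball x r, |u y - c| ∂volume) = 0 := by
    refine eventually_of_mem hmem fun r hr => ?_
    have hsub : ball x r ⊆ ball x ε := ball_subset_ball (le_of_lt hr.2)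
    rw [setAverage_eq]
    have : ∫ y in ball x r, |u y - c| ∂volume = 0 := by
      rw [setIntegral_congr_fun measurableSet_ball
        (g := fun _ => (0:ℝ)) (fun y hy => by rw [h y (hsub hy)]; simp)]
      simp
    rw [this]; simp
  have : Tendsto (fun _ : ℝ => (0:ℝ)) (𝓝[>] (0:ℝ)) (𝓝 0) := tendsto_const_nhds
  exact Tendsto.congr' (hev.mono fun r hr => hr.symm) this

lemma notin_cantor (x : ℝ) (hx : x ∉ cantorSet) :
    ∃ z, ApproxLimAtR (Set.indicator evenRemoved fun _ => (1:ℝ)) x z := by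
  classical
  have hex : ∃ n, x ∉ preCantor n := by
    by_contra hc; push_neg at hc; exact hx (mem_iInter.2 hc)
  obtain ⟨n, hn, hmin⟩ : ∃ n, x ∉ preCantor n ∧ ∀ k < n, x ∈ preCantor k :=
    ⟨Nat.find hex, Nat.find_spec hex, fun k hk => by
      have := Nat.find_min hex hk; push_neg at this; exact this⟩
  rcases n with _ | k
  · -- x ∉ [0,1]
    have hop : IsOpen (preCantor 0)ᶜ := isClosed_Icc.isOpen_compl
    obtain ⟨ε, hε, hball⟩ := Metric.isOpen_iff.1 hop x hn
    refine ⟨0, approxLim_of_const hε fun y hy => ?_⟩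
    rw [Set.indicator_of_notMem]
    intro hc
    exact hball hy (evenRemoved_subset hc)
  · have hxd : x ∈ preCantor k \ preCantor (k+1) := ⟨hmin k (by omega), hn⟩
    obtain ⟨ε, hε, hball⟩ := Metric.isOpen_iff.1 (isOpen_diff k) x hxd
    rcases Nat.even_or_odd k with he | ho
    · refine ⟨0, approxLim_of_const hε fun y hy => ?_⟩
      rw [Set.indicator_of_notMem]
      exact fun hc => Set.disjoint_left.1 (even_diff_disjoint he) (hball hy) hc
    · obtain ⟨j, hj⟩ := ho
      refine ⟨1, approxLim_of_const hε fun y hy => ?_⟩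
      rw [Set.indicator_of_mem]
      refine odd_diff_subset (j := j) ?_
      have h1 : k = 2*j+1 := hj
      have h2 : k + 1 = 2*j+2 := by omega
      rw [← h1, ← h2]
      exact hball hy

lemma in_cantor (x : ℝ) (hx : x ∈ cantorSet) :
    ¬ ∃ z, ApproxLimAtR (Set.indicator evenRemoved fun _ => (1:ℝ)) x z := by
  rintro ⟨z, hz⟩
  set u := Set.indicator evenRemoved fun _ => (1:ℝ) with hu
  have hmeas : Measurable u := measurable_const.indicator isOpen_evenRemoved.measurableSet
  -- eventually the average is at least 1/108
  have hev : ∀ᶠ r in 𝓝[>] (0:ℝ),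
      (1/108 : ℝ) ≤ ⨍ y in ball x r, |u y - z| ∂volume := by
    refine eventually_of_mem (Ioc_mem_nhdsGT_of_mem ⟨le_refl 0, zero_lt_one⟩)
      fun r hr => ?_
    obtain ⟨hr0, hr1⟩ := hr
    obtain ⟨hE, hC⟩ := volume_bounds x hx hr0 hr1
    have hballvol : volume (ball x r) = ENNReal.ofReal (2 * r) := Real.volume_ball x r
    have hballne : volume (ball x r) ≠ ⊤ := by rw [hballvol]; exact ENNReal.ofReal_ne_top
    -- integrability
    have hintu : IntegrableOn u (ball x r) volume := by
      rw [hu, IntegrableOn, integrable_indicator_iff isOpen_evenRemoved.measurableSet]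
      refine (integrableOn_const_iff (by simp)).2 (Or.inr ?_)
      calc (volume.restrict (ball x r)) evenRemoved ≤ volume (ball x r) := by
            rw [Measure.restrict_apply isOpen_evenRemoved.measurableSet]
            exact measure_mono Set.inter_subset_right
        _ < ⊤ := measure_ball_lt_top
    have hint : IntegrableOn (fun y => |u y - z|) (ball x r) volume :=
      (hintu.sub ((integrableOn_const_iff (by simp)).2 (Or.inr measure_ball_lt_top))).abs
    -- choose the witness set
    obtain ⟨S, hSsub, hSmeas, hSvol, hSlow⟩ :
        ∃ S : Set ℝ, S ⊆ ball x r ∧ MeasurableSet S ∧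
          ENNReal.ofReal (r/27) ≤ volume S ∧ ∀ y ∈ S, (1/2 : ℝ) ≤ |u y - z| := by
      rcases le_or_gt z (1/2) with hz2 | hz2
      · refine ⟨ball x r ∩ evenRemoved, Set.inter_subset_left,
          measurableSet_ball.inter isOpen_evenRemoved.measurableSet, hE, ?_⟩
        rintro y ⟨_, hyE⟩
        rw [hu, Set.indicator_of_mem hyE]
        rcases abs_cases (1 - z) with ⟨h, _⟩ | ⟨h, _⟩ <;> linarith
      · refine ⟨ball x r \ evenRemoved, Set.diff_subset,
          measurableSet_ball.diff isOpen_evenRemoved.measurableSet, hC, ?_⟩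
        rintro y ⟨_, hyE⟩
        rw [hu, Set.indicator_of_notMem hyE]
        rcases abs_cases (0 - z) with ⟨h, _⟩ | ⟨h, _⟩ <;> linarith
    have hSfin : volume S ≠ ⊤ :=
      ne_top_of_le_ne_top hballne (measure_mono hSsub)
    -- integral lower bound
    have hstep1 : (1/2 : ℝ) * (volume S).toReal ≤ ∫ y in S, |u y - z| ∂volume := by
      have h := setIntegral_ge_of_const_le hSmeas hSfin hSlow (hint.mono_set hSsub)
      rw [measureReal_def, smul_eq_mul] at h; linarith
    have hstep2 : ∫ y in S, |u y - z| ∂volume ≤ ∫ y in ball x r, |u y - z| ∂volume := by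
      refine setIntegral_mono_set hint ?_ (HasSubset.Subset.eventuallyLE hSsub)
      exact Filter.Eventually.of_forall fun y => abs_nonneg _
    have hSvol' : r/27 ≤ (volume S).toReal := by
      have := ENNReal.toReal_mono hSfin hSvol
      rwa [ENNReal.toReal_ofReal (by linarith)] at this
    rw [setAverage_eq, measureReal_def, hballvol, ENNReal.toReal_ofReal (by linarith), smul_eq_mul]
    have hI : (1/108 : ℝ) * (2 * r) ≤ ∫ y in ball x r, |u y - z| ∂volume := by
      linarith [hstep1, hstep2, hSvol']
    calc (1/108 : ℝ) = (2*r)⁻¹ * ((1/108) * (2*r)) := by field_simp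
      _ ≤ (2*r)⁻¹ * ∫ y in ball x r, |u y - z| ∂volume :=
          mul_le_mul_of_nonneg_left hI (by positivity)
  have : (1/108 : ℝ) ≤ 0 := ge_of_tendsto hz hev
  linarith

/-- Example 3.5 of the paper.
For the set `E` of intervals removed from `[0,1]` at the even steps of the
Cantor middle-thirds construction, every point `x` of the Cantor set satisfies
`1/54 ≤ liminf_{r→0⁺} |B_r(x) ∩ E|/(2r) ≤ limsup_{r→0⁺} |B_r(x) ∩ E|/(2r) ≤ 53/54`,
and consequently the approximate discontinuity set of `χ_E` is exactly the
Cantor set. -/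
theorem cantor_density_example :
    (∀ x ∈ cantorSet,
      (1 / 54 : ℝ) ≤
          liminf (fun r : ℝ => (volume (ball x r ∩ evenRemoved)).toReal / (2 * r))
            (𝓝[>] 0) ∧
      liminf (fun r : ℝ => (volume (ball x r ∩ evenRemoved)).toReal / (2 * r))
            (𝓝[>] 0) ≤
        limsup (fun r : ℝ => (volume (ball x r ∩ evenRemoved)).toReal / (2 * r))
            (𝓝[>] 0) ∧
      limsup (fun r : ℝ => (volume (ball x r ∩ evenRemoved)).toReal / (2 * r))
            (𝓝[>] 0) ≤ (53 / 54 : ℝ)) ∧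
    SSetR (Set.indicator evenRemoved fun _ => (1 : ℝ)) = cantorSet := by
  constructor
  · exact fun x hx => part1 x hx
  · apply Set.ext
    intro x
    constructor
    · intro h
      by_contra hxc
      exact h (notin_cantor x hxc)
    · exact fun hx => in_cantor x hx

end GGCantor
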